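/- Let d be a differential of degree 1 and δ a differential of degree −1 on E. The endomorphism [d,δ] = d∘δ + δ∘d is invertible if and only if (E,d) is exact, (E,δ) is exact, and range d ∩ range δ = 0. Under these conditions, E = range d ⊕ range δ. (Proposition 2.7.) -/
import Mathlib


/- STATEMENT 4: For a degree-1 differential `d` and a degree-(-1) differential `δ`, the
supercommutator `[d,δ] = d∘δ + δ∘d` is invertible iff `(E,d)` is exact, `(E,δ)` is exact, and
`range d ∩ range δ = 0`; and under these conditions `E = range d ⊕ range δ`.

`E` is modelled as a finite-dimensional complex vector space `V` together with a family of
projections `π i` (idempotent, mutually orthogonal, supported in `[p, q]`, summing to `1`),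
whose ranges are the graded pieces `E^i`.  An endomorphism `a` has degree `k` iff
`a * π i = π (i + k) * a` for all `i`. -/
theorem stmt4 {V : Type} [AddCommGroup V] [Module ℂ V] [FiniteDimensional ℂ V]
    (p q : ℤ) (hpq : p ≤ q) (π : ℤ → Module.End ℂ V)
    (hidem : ∀ i, π i * π i = π i)
    (horth : ∀ i j, i ≠ j → π i * π j = 0)
    (hsupp : ∀ i, i ∉ Finset.Icc p q → π i = 0)
    (hsum : ∑ i ∈ Finset.Icc p q, π i = 1)
    (d δ : Module.End ℂ V)
    (hd : ∀ i, d * π i = π (i + 1) * d)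
    (hδ : ∀ i, δ * π i = π (i - 1) * δ)
    (hdd : d * d = 0)
    (hδδ : δ * δ = 0) :
    (IsUnit (d * δ + δ * d) ↔
      (LinearMap.ker d = LinearMap.range d ∧ LinearMap.ker δ = LinearMap.range δ ∧
        LinearMap.range d ⊓ LinearMap.range δ = ⊥)) ∧
    ((LinearMap.ker d = LinearMap.range d ∧ LinearMap.ker δ = LinearMap.range δ ∧
        LinearMap.range d ⊓ LinearMap.range δ = ⊥) →
      LinearMap.range d ⊔ LinearMap.range δ = ⊤) := by

  have main : IsUnit (d * δ + δ * d) ↔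
      (LinearMap.ker d = LinearMap.range d ∧ LinearMap.ker δ = LinearMap.range δ ∧
        LinearMap.range d ⊓ LinearMap.range δ = ⊥) := by
    constructor
    · intro hu
      set L := d * δ + δ * d with hL
      have hcd : Commute L d := by
        show L * d = d * L
        rw [hL]; rw [add_mul, mul_add, mul_assoc, mul_assoc, hdd, ← mul_assoc, ← mul_assoc, hdd]
        simp
      have hcδ : Commute L δ := by
        show L * δ = δ * L
        rw [hL]; rw [add_mul, mul_add, mul_assoc, mul_assoc, hδδ, ← mul_assoc, ← mul_assoc, hδδ]
        simp
      set g : Module.End ℂ V := ↑hu.unit⁻¹ with hg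
      have hgL : g * L = 1 := by
        rw [hg]; exact hu.val_inv_mul
      have hLg : L * g = 1 := by
        rw [hg]; exact hu.mul_val_inv
      have hgd : g * d = d * g := by
        have : Commute (↑hu.unit : Module.End ℂ V) d := by rwa [hu.unit_spec]
        exact this.units_inv_left
      have hgδ : g * δ = δ * g := by
        have : Commute (↑hu.unit : Module.End ℂ V) δ := by rwa [hu.unit_spec]
        exact this.units_inv_left
      have hker_d : LinearMap.ker d = LinearMap.range d := by
        apply le_antisymm
        · intro x hx
          have hx' : d x = 0 := hx
          have : x = d (g (δ x)) := by
            have h1 : g (L x) = x := by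
              have := congrArg (fun f : Module.End ℂ V => f x) hgL
              simpa [Module.End.mul_apply] using this
            have h2 : L x = d (δ x) := by
              simp [hL, LinearMap.add_apply, Module.End.mul_apply, hx']
            have h3 : g (d (δ x)) = d (g (δ x)) := by
              have := congrArg (fun f : Module.End ℂ V => f (δ x)) hgd
              simpa [Module.End.mul_apply] using this
            conv_lhs => rw [← h1, h2]
            exact h3
          exact ⟨g (δ x), this.symm⟩
        · rintro x ⟨y, rfl⟩
          have : d (d y) = (d * d) y := rfl
          simp [LinearMap.mem_ker, this, hdd]
      have hker_δ : LinearMap.ker δ = LinearMap.range δ := by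
        apply le_antisymm
        · intro x hx
          have hx' : δ x = 0 := hx
          have : x = δ (g (d x)) := by
            have h1 : g (L x) = x := by
              have := congrArg (fun f : Module.End ℂ V => f x) hgL
              simpa [Module.End.mul_apply] using this
            have h2 : L x = δ (d x) := by
              simp [hL, LinearMap.add_apply, Module.End.mul_apply, hx']
            have h3 : g (δ (d x)) = δ (g (d x)) := by
              have := congrArg (fun f : Module.End ℂ V => f (d x)) hgδ
              simpa [Module.End.mul_apply] using this
            conv_lhs => rw [← h1, h2]
            exact h3
          exact ⟨g (d x), this.symm⟩
        · rintro x ⟨y, rfl⟩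
          have : δ (δ y) = (δ * δ) y := rfl
          simp [LinearMap.mem_ker, this, hδδ]
      refine ⟨hker_d, hker_δ, ?_⟩
      rw [eq_bot_iff]
      rintro x ⟨⟨a, ha⟩, ⟨b, hb⟩⟩
      have h1 : g (L x) = x := by
        have := congrArg (fun f : Module.End ℂ V => f x) hgL
        simpa [Module.End.mul_apply] using this
      have hdx : δ (d x) = 0 := by
        rw [← ha]
        have : δ (d (d a)) = δ ((d * d) a) := rfl
        simp [this, hdd]
      have hδx : d (δ x) = 0 := by
        rw [← hb]
        have : d (δ (δ b)) = d ((δ * δ) b) := rfl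
        simp [this, hδδ]
      have : x = 0 := by
        rw [← h1]
        simp [hL, LinearMap.add_apply, Module.End.mul_apply, hdx, hδx]
      simp [this]
    · rintro ⟨h1, h2, h3⟩
      have hinj : Function.Injective (d * δ + δ * d) := by
        rw [← LinearMap.ker_eq_bot, eq_bot_iff]
        intro x hx
        have hx' : d (δ x) + δ (d x) = 0 := by
          simpa [LinearMap.add_apply, Module.End.mul_apply] using hx
        have hmem : d (δ x) ∈ LinearMap.range d ⊓ LinearMap.range δ := by
          refine ⟨⟨δ x, rfl⟩, ⟨-(d x), ?_⟩⟩
          rw [map_neg]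
          linear_combination (norm := abel) -hx'
        have hdδ : d (δ x) = 0 := by
          have := h3 ▸ hmem
          simpa using this
        have hδd : δ (d x) = 0 := by
          have := hx'; rw [hdδ] at this; simpa using this
        have hδx0 : δ x = 0 := by
          have m1 : δ x ∈ LinearMap.range d := h1 ▸ (by exact hdδ : δ x ∈ LinearMap.ker d)
          have m2 : δ x ∈ LinearMap.range δ := ⟨x, rfl⟩
          have := Submodule.mem_inf.mpr ⟨m1, m2⟩
          rw [h3] at this; simpa using this
        have hdx0 : d x = 0 := by
          have m2 : d x ∈ LinearMap.range δ := h2 ▸ (by exact hδd : d x ∈ LinearMap.ker δ)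
          have m1 : d x ∈ LinearMap.range d := ⟨x, rfl⟩
          have := Submodule.mem_inf.mpr ⟨m1, m2⟩
          rw [h3] at this; simpa using this
        have m1 : x ∈ LinearMap.range d := h1 ▸ (by exact hdx0 : x ∈ LinearMap.ker d)
        have m2 : x ∈ LinearMap.range δ := h2 ▸ (by exact hδx0 : x ∈ LinearMap.ker δ)
        have := Submodule.mem_inf.mpr ⟨m1, m2⟩
        rw [h3] at this; simpa using this
      have hbij : Function.Bijective (d * δ + δ * d) :=
        ⟨hinj, (LinearMap.injective_iff_surjective).mp hinj⟩
      exact (Module.End.isUnit_iff _).mpr hbij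
  refine ⟨main, ?_⟩
  intro h
  have hu := main.mpr h
  set L := d * δ + δ * d with hL
  set g : Module.End ℂ V := ↑hu.unit⁻¹ with hg
  have hLg : L * g = 1 := by
    rw [hg]; exact hu.mul_val_inv
  rw [eq_top_iff]
  intro x _
  have h1 : L (g x) = x := by
    have := congrArg (fun f : Module.End ℂ V => f x) hLg
    simpa [Module.End.mul_apply] using this
  have hx : x = d (δ (g x)) + δ (d (g x)) := by
    conv_lhs => rw [← h1]
    simp [hL, LinearMap.add_apply, Module.End.mul_apply]
  rw [hx]
  exact Submodule.add_mem_sup ⟨δ (g x), rfl⟩ ⟨d (g x), rfl⟩
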